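/- Let 0 < β < 1, θ ≥ 0, γ > 0, π ≥ 0, δ > 0, ρ > 0 satisfy δ(1−β+θ) < ρ < δ(1−β+θ)/(1−β). Set φ := (1−β+θ)/(1−β), δ* := δφ, z̄ := ((δ*+π)/(βγ))^{1/(1−β)}, ū := (ρ − δ(1−β+θ))(1−β)/(δβ(1−β+θ)), g := (δ*−ρ)/β, g_h := g/φ, and for z₀ > 0 define z(t) := z̄z₀/[(z̄^{1−β}−z₀^{1−β})e^{−(((1−β)(δ+π)+δθ)/β)t}+z₀^{1−β}]^{1/(1−β)}. Let c₀, k₀, h₀, μ₀ > 0 satisfy c₀/k₀ = (ρ+π(1−β))/β, ū·h₀^{φ} = z₀·k₀, and ū^β = γ(1−β)k₀^β h₀^{θ−β} c₀^{−β}z₀^{−β}·z₀^{β}/(δμ₀) (i.e. the static first-order condition at t = 0). Define c(t) = c₀z₀e^{g t}z(t)^{−1}, k(t) = k₀z₀e^{g t}z(t)^{−1}, u(t) = ū, h(t) = h₀e^{g_h t}, λ(t) = c₀^{−β}z₀^{−β}e^{([(ρ−δ)(1−β)−δθ]/(1−β))t}z(t)^{β}, μ(t) = μ₀·e^{([(ρ−δ)(1−β)−δθ](β−θ)/(β(1−β+θ)))t}.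 Then for all t ≥ 0: λ = c^{−β}; u^β = γ(1−β)k^β h^{θ−β}·λ/(δμ); k' = γk^β u^{1−β}h^{1−β+θ} − πk − c; h' = δ(1−u)h; λ' = −λγβu^{1−β}k^{β−1}h^{1−β+θ} + λ(ρ+π); and μ' = μ(ρ−δ) − (μθδ/(1−β))·u. -/

import Mathlib

set_option maxHeartbeats 1000000

private lemma exp_rpow'' (x y : ℝ) : Real.exp x ^ y = Real.exp (x * y) := by
  rw [Real.rpow_def_of_pos (Real.exp_pos x), Real.log_exp]

private lemma hasDerivAt_exp_aux (C a t : ℝ) :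
    HasDerivAt (fun s => C * Real.exp (a * s)) (C * (Real.exp (a * t) * a)) t := by
  have h1 : HasDerivAt (fun s : ℝ => a * s) a t := by
    simpa using (hasDerivAt_id t).const_mul a
  exact h1.exp.const_mul C

private lemma hasDerivAt_aux (C a A m K p t : ℝ)
    (hD : A * Real.exp (-m * t) + K ≠ 0) :
    HasDerivAt (fun s => C * Real.exp (a * s) * (A * Real.exp (-m * s) + K) ^ p)
      (C * Real.exp (a * t) * (A * Real.exp (-m * t) + K) ^ p * a
        - C * Real.exp (a * t)
          * (p * (A * Real.exp (-m * t) + K) ^ (p - 1) * (m * (A * Real.exp (-m * t))))) t := by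
  have h2 : HasDerivAt (fun s : ℝ => C * Real.exp (a * s)) (C * (Real.exp (a * t) * a)) t :=
    hasDerivAt_exp_aux C a t
  have h3 : HasDerivAt (fun s : ℝ => -m * s) (-m) t := by
    simpa using (hasDerivAt_id t).const_mul (-m)
  have h4 : HasDerivAt (fun s : ℝ => A * Real.exp (-m * s) + K)
      (A * (Real.exp (-m * t) * -m)) t := ((h3.exp).const_mul A).add_const K
  have h5 := h4.rpow_const (p := p) (Or.inl hD)
  have h6 := h2.mul h5
  exact h6.congr_deriv (by ring)

/-- The second closed-form solution of the Lucas-Uzawa model with externalities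
in the case σ = β, involving the transitional-dynamics variable z, satisfies all
first-order conditions of the original model. -/
theorem sigma_eq_beta_second_solution (β θ γ pi δ ρ z0 : ℝ)
    (hβ0 : 0 < β) (hβ1 : β < 1) (hθ : 0 ≤ θ) (hγ : 0 < γ) (hpi : 0 ≤ pi)
    (hδ : 0 < δ) (hρ : 0 < ρ) (hz0 : 0 < z0)
    (hρ1 : δ * (1 - β + θ) < ρ) (hρ2 : ρ < δ * (1 - β + θ) / (1 - β))
    (φ δs zbar ubar g gh : ℝ)
    (hφ : φ = (1 - β + θ) / (1 - β)) (hδs : δs = δ * φ)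
    (hzbar : zbar = ((δs + pi) / (β * γ)) ^ (1 / (1 - β)))
    (hubar : ubar = (ρ - δ * (1 - β + θ)) * (1 - β) / (δ * β * (1 - β + θ)))
    (hg : g = (δs - ρ) / β) (hgh : gh = g / φ)
    (z : ℝ → ℝ)
    (hz : ∀ t, z t = zbar * z0 /
      ((zbar ^ (1 - β) - z0 ^ (1 - β))
        * Real.exp (-(((1 - β) * (δ + pi) + δ * θ) / β) * t)
        + z0 ^ (1 - β)) ^ (1 / (1 - β)))
    (c0 k0 h0 μ0 : ℝ)
    (hc0 : 0 < c0) (hk0 : 0 < k0) (hh0 : 0 < h0) (hμ0 : 0 < μ0)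
    (hck : c0 / k0 = (ρ + pi * (1 - β)) / β)
    (huh : ubar * h0 ^ φ = z0 * k0)
    (hfoc0 : ubar ^ β = γ * (1 - β) * k0 ^ β * h0 ^ (θ - β) * c0 ^ (-β)
      * z0 ^ (-β) * z0 ^ β / (δ * μ0))
    (c k u h lam μ : ℝ → ℝ)
    (hc : ∀ t, c t = c0 * z0 * Real.exp (g * t) * z t ^ (-(1:ℝ)))
    (hk : ∀ t, k t = k0 * z0 * Real.exp (g * t) * z t ^ (-(1:ℝ)))
    (hu : ∀ t, u t = ubar)
    (hh : ∀ t, h t = h0 * Real.exp (gh * t))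
    (hlam : ∀ t, lam t = c0 ^ (-β) * z0 ^ (-β)
      * Real.exp (((ρ - δ) * (1 - β) - δ * θ) / (1 - β) * t) * z t ^ β)
    (hμ : ∀ t, μ t = μ0
      * Real.exp (((ρ - δ) * (1 - β) - δ * θ) * (β - θ) / (β * (1 - β + θ)) * t)) :
    (∀ t ≥ (0:ℝ), lam t = c t ^ (-β)) ∧
    (∀ t ≥ (0:ℝ), u t ^ β
      = γ * (1 - β) * k t ^ β * h t ^ (θ - β) * lam t / (δ * μ t)) ∧
    (∀ t ≥ (0:ℝ), deriv k t
      = γ * k t ^ β * u t ^ (1 - β) * h t ^ (1 - β + θ) - pi * k t - c t) ∧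
    (∀ t ≥ (0:ℝ), deriv h t = δ * (1 - u t) * h t) ∧
    (∀ t ≥ (0:ℝ), deriv lam t
      = -(lam t) * γ * β * u t ^ (1 - β) * k t ^ (β - 1) * h t ^ (1 - β + θ)
        + lam t * (ρ + pi)) ∧
    (∀ t ≥ (0:ℝ), deriv μ t = μ t * (ρ - δ) - μ t * θ * δ / (1 - β) * u t) := by
  have hb : (0:ℝ) < 1 - β := by linarith
  have hbne : (1:ℝ) - β ≠ 0 := ne_of_gt hb
  have hbθ : (0:ℝ) < 1 - β + θ := by linarith
  have hβne : β ≠ 0 := ne_of_gt hβ0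
  have hφpos : 0 < φ := by rw [hφ]; positivity
  have hφne : φ ≠ 0 := ne_of_gt hφpos
  have hδspos : 0 < δs := by rw [hδs]; positivity
  have hδsπ : (0:ℝ) < δs + pi := by linarith
  have hbase : (0:ℝ) < (δs + pi) / (β * γ) := by positivity
  have hzbarpos : 0 < zbar := by rw [hzbar]; exact Real.rpow_pos_of_pos hbase _
  have hzbb : zbar ^ (1 - β) = (δs + pi) / (β * γ) := by
    rw [hzbar, one_div, Real.rpow_inv_rpow hbase.le hbne]
  have hubarpos : 0 < ubar := by
    rw [hubar]; apply div_pos; · nlinarith [mul_pos hδ (by linarith : (0:ℝ) < 1 - β + θ)]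
    · positivity
  have hghφ : gh * φ = g := by rw [hgh]; field_simp
  have hα : ((ρ - δ) * (1 - β) - δ * θ) / (1 - β) = -(β * g) := by
    rw [hg, hδs, hφ]; field_simp; ring
  have hrr : ((ρ - δ) * (1 - β) - δ * θ) * (β - θ) / (β * (1 - β + θ)) = gh * (θ - β) := by
    rw [hgh, hg, hδs, hφ]; field_simp; ring
  have hghv : gh = δ * (1 - ubar) := by
    rw [hgh, hg, hδs, hφ, hubar]; field_simp; ring
  have hc0v : c0 = k0 * (ρ + pi * (1 - β)) / β := by
    rw [div_eq_div_iff hk0.ne' hβ0.ne'] at hck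
    field_simp
    linarith [hck]
  set m : ℝ := ((1 - β) * (δ + pi) + δ * θ) / β with hm
  set A : ℝ := zbar ^ (1 - β) - z0 ^ (1 - β) with hA
  have hZ0pos : 0 < z0 ^ (1 - β) := Real.rpow_pos_of_pos hz0 _
  have hzbbpos : 0 < zbar ^ (1 - β) := Real.rpow_pos_of_pos hzbarpos _
  have hmpos : 0 < m := by
    rw [hm]; apply div_pos
    · have h1 : 0 < (1 - β) * (δ + pi) := mul_pos hb (by linarith)
      have h2 : 0 ≤ δ * θ := mul_nonneg hδ.le hθ
      linarith
    · exact hβ0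
  have hDpos : ∀ t : ℝ, 0 ≤ t → 0 < A * Real.exp (-m * t) + z0 ^ (1 - β) := by
    intro t ht
    have he1 : Real.exp (-m * t) ≤ 1 := by
      rw [Real.exp_le_one_iff]
      have := mul_nonneg hmpos.le ht
      linarith
    have he0 : 0 < Real.exp (-m * t) := Real.exp_pos _
    rw [hA]
    nlinarith [mul_pos hzbbpos he0, mul_nonneg hZ0pos.le (by linarith : (0:ℝ) ≤ 1 - Real.exp (-m*t))]
  have hzpos : ∀ t : ℝ, 0 ≤ t → 0 < z t := by
    intro t ht
    rw [hz t]
    exact div_pos (mul_pos hzbarpos hz0) (Real.rpow_pos_of_pos (hDpos t ht) _)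
  have hzb : ∀ t : ℝ, 0 ≤ t → z t ^ (1 - β)
      = zbar ^ (1 - β) * z0 ^ (1 - β) / (A * Real.exp (-m * t) + z0 ^ (1 - β)) := by
    intro t ht
    rw [hz t, Real.div_rpow (mul_pos hzbarpos hz0).le (Real.rpow_pos_of_pos (hDpos t ht) _).le,
      Real.mul_rpow hzbarpos.le hz0.le, one_div, Real.rpow_inv_rpow (hDpos t ht).le hbne]
  have hkpos : ∀ t : ℝ, 0 ≤ t → 0 < k t := by
    intro t ht
    rw [hk t]
    exact mul_pos (mul_pos (mul_pos hk0 hz0) (Real.exp_pos _)) (Real.rpow_pos_of_pos (hzpos t ht) _)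
  have hhpos : ∀ t : ℝ, 0 < h t := by
    intro t; rw [hh t]; positivity
  -- the key relation u h^φ = z k
  have hzk0 : ∀ t : ℝ, 0 ≤ t → u t * h t ^ φ = z t * k t := by
    intro t ht
    rw [hu t, hh t, hk t, Real.mul_rpow hh0.le (Real.exp_pos _).le, exp_rpow'',
      Real.rpow_neg_one]
    have hzt : z t ≠ 0 := (hzpos t ht).ne'
    have h1 : z t * (k0 * z0 * Real.exp (g * t) * (z t)⁻¹)
        = k0 * z0 * Real.exp (g * t) := by
      field_simp
    rw [h1, show gh * t * φ = g * t by rw [← hghφ]; ring]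
    calc ubar * (h0 ^ φ * Real.exp (g * t)) = ubar * h0 ^ φ * Real.exp (g * t) := by ring
      _ = z0 * k0 * Real.exp (g * t) := by rw [huh]
      _ = k0 * z0 * Real.exp (g * t) := by ring
  have H5 : ∀ t : ℝ, 0 ≤ t → u t ^ (1 - β) * k t ^ (β - 1) * h t ^ (1 - β + θ)
      = z t ^ (1 - β) := by
    intro t ht
    have hkt := hkpos t ht
    have hht := hhpos t
    have hzt := hzpos t ht
    have h1 : h t ^ (1 - β + θ) = (h t ^ φ) ^ (1 - β) := by
      rw [← Real.rpow_mul hht.le, hφ]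
      congr 1
      field_simp
    rw [h1, hu t]
    have h2 : ubar ^ (1 - β) * (h t ^ φ) ^ (1 - β) = (ubar * h t ^ φ) ^ (1 - β) := by
      rw [Real.mul_rpow hubarpos.le (Real.rpow_pos_of_pos hht _).le]
    have h3 : ubar * h t ^ φ = z t * k t := by rw [← hu t]; exact hzk0 t ht
    have h4 : (z t * k t) ^ (1 - β) = z t ^ (1 - β) * k t ^ (1 - β) :=
      Real.mul_rpow hzt.le hkt.le
    have h5 : k t ^ (β - 1) * k t ^ (1 - β) = 1 := by
      rw [← Real.rpow_add hkt]; norm_num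
    calc ubar ^ (1 - β) * k t ^ (β - 1) * (h t ^ φ) ^ (1 - β)
        = ubar ^ (1 - β) * (h t ^ φ) ^ (1 - β) * k t ^ (β - 1) := by ring
      _ = (z t ^ (1 - β) * k t ^ (1 - β)) * k t ^ (β - 1) := by rw [h2, h3, h4]
      _ = z t ^ (1 - β) * (k t ^ (β - 1) * k t ^ (1 - β)) := by ring
      _ = z t ^ (1 - β) := by rw [h5]; ring
  have H3 : ∀ t : ℝ, 0 ≤ t → γ * k t ^ β * u t ^ (1 - β) * h t ^ (1 - β + θ)
      = γ * z t ^ (1 - β) * k t := by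
    intro t ht
    have hkt := hkpos t ht
    have hkβ : k t ^ β = k t * k t ^ (β - 1) := by
      have h' := Real.rpow_add hkt 1 (β - 1)
      rw [Real.rpow_one] at h'
      rw [show (1:ℝ) + (β - 1) = β by ring] at h'
      exact h'
    rw [hkβ]
    linear_combination γ * k t * (H5 t ht)
  refine ⟨?_, ?_, ?_, ?_, ?_, ?_⟩
  · -- (1) lam = c ^ (-β)
    intro t ht
    have hzt := hzpos t ht
    have hc_exp : c t ^ (-β)
        = c0 ^ (-β) * z0 ^ (-β) * Real.exp (g * t * (-β)) * z t ^ β := by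
      rw [hc t]
      rw [Real.mul_rpow (by positivity) (Real.rpow_pos_of_pos hzt _).le,
        Real.mul_rpow (by positivity) (Real.exp_pos _).le,
        Real.mul_rpow hc0.le hz0.le, exp_rpow'', ← Real.rpow_mul hzt.le]
      norm_num
    rw [hlam t, hc_exp]
    have : Real.exp (((ρ - δ) * (1 - β) - δ * θ) / (1 - β) * t)
        = Real.exp (g * t * (-β)) := by
      congr 1
      linear_combination t * hα
    rw [this]
  · -- (2) static FOC
    intro t ht
    have hzt := hzpos t ht
    have hkβ2 : k t ^ β = k0 ^ β * z0 ^ β * Real.exp (g * t * β) * z t ^ (-β) := by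
      rw [hk t]
      rw [Real.mul_rpow (by positivity) (Real.rpow_pos_of_pos hzt _).le,
        Real.mul_rpow (by positivity) (Real.exp_pos _).le,
        Real.mul_rpow hk0.le hz0.le, exp_rpow'', ← Real.rpow_mul hzt.le]
      norm_num
    have hhθβ : h t ^ (θ - β) = h0 ^ (θ - β) * Real.exp (gh * t * (θ - β)) := by
      rw [hh t, Real.mul_rpow hh0.le (Real.exp_pos _).le, exp_rpow'']
    have hz1 : z t ^ (-β) * z t ^ β = 1 := by
      rw [← Real.rpow_add hzt]; norm_num
    have hE : Real.exp (g * t * β) * Real.exp (gh * t * (θ - β))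
          * Real.exp (((ρ - δ) * (1 - β) - δ * θ) / (1 - β) * t)
        = Real.exp (((ρ - δ) * (1 - β) - δ * θ) * (β - θ) / (β * (1 - β + θ)) * t) := by
      rw [← Real.exp_add, ← Real.exp_add]
      congr 1
      linear_combination t * hα - t * hrr
    rw [hu t, hlam t, hμ t, hkβ2, hhθβ]
    symm
    calc γ * (1 - β) * (k0 ^ β * z0 ^ β * Real.exp (g * t * β) * z t ^ (-β))
          * (h0 ^ (θ - β) * Real.exp (gh * t * (θ - β)))
          * (c0 ^ (-β) * z0 ^ (-β)
            * Real.exp (((ρ - δ) * (1 - β) - δ * θ) / (1 - β) * t) * z t ^ β)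
          / (δ * (μ0 * Real.exp (((ρ - δ) * (1 - β) - δ * θ) * (β - θ) / (β * (1 - β + θ)) * t)))
        = (γ * (1 - β) * k0 ^ β * h0 ^ (θ - β) * c0 ^ (-β) * z0 ^ (-β) * z0 ^ β / (δ * μ0))
          * ((z t ^ (-β) * z t ^ β)
            * ((Real.exp (g * t * β) * Real.exp (gh * t * (θ - β))
              * Real.exp (((ρ - δ) * (1 - β) - δ * θ) / (1 - β) * t))
              * (Real.exp (((ρ - δ) * (1 - β) - δ * θ) * (β - θ) / (β * (1 - β + θ)) * t))⁻¹)) := by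
          ring
      _ = ubar ^ β * (1 * (Real.exp (((ρ - δ) * (1 - β) - δ * θ) * (β - θ) / (β * (1 - β + θ)) * t)
            * (Real.exp (((ρ - δ) * (1 - β) - δ * θ) * (β - θ) / (β * (1 - β + θ)) * t))⁻¹)) := by
          rw [hz1, hE, ← hfoc0]
      _ = ubar ^ β := by
          rw [mul_inv_cancel₀ (Real.exp_ne_zero _)]; ring
  · -- (3) k' equation
    intro t ht
    have hDt := hDpos t ht
    have hkfun : k = fun s => k0 * z0 / (zbar * z0) * Real.exp (g * s)
        * (A * Real.exp (-m * s) + z0 ^ (1 - β)) ^ (1 / (1 - β)) := by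
      funext s
      rw [hk s, hz s, Real.rpow_neg_one, inv_div]
      ring
    have hkd : deriv k t
        = k0 * z0 / (zbar * z0) * Real.exp (g * t)
            * (A * Real.exp (-m * t) + z0 ^ (1 - β)) ^ (1 / (1 - β)) * g
          - k0 * z0 / (zbar * z0) * Real.exp (g * t)
            * (1 / (1 - β) * (A * Real.exp (-m * t) + z0 ^ (1 - β)) ^ (1 / (1 - β) - 1)
              * (m * (A * Real.exp (-m * t)))) := by
      rw [hkfun]
      exact (hasDerivAt_aux (k0 * z0 / (zbar * z0)) g A m (z0 ^ (1 - β)) (1 / (1 - β)) t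
        hDt.ne').deriv
    have hktv : k t = k0 * z0 / (zbar * z0) * Real.exp (g * t)
        * (A * Real.exp (-m * t) + z0 ^ (1 - β)) ^ (1 / (1 - β)) := by
      rw [hk t, hz t, Real.rpow_neg_one, inv_div]; ring
    have hctv : c t = c0 * z0 / (zbar * z0) * Real.exp (g * t)
        * (A * Real.exp (-m * t) + z0 ^ (1 - β)) ^ (1 / (1 - β)) := by
      rw [hc t, hz t, Real.rpow_neg_one, inv_div]; ring
    have hPm : (A * Real.exp (-m * t) + z0 ^ (1 - β)) ^ (1 / (1 - β) - 1)
        = (A * Real.exp (-m * t) + z0 ^ (1 - β)) ^ (1 / (1 - β))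
          / (A * Real.exp (-m * t) + z0 ^ (1 - β)) := by
      rw [Real.rpow_sub hDt, Real.rpow_one]
    have i1 : m = (1 - β) * (γ * zbar ^ (1 - β)) := by
      rw [hm, hzbb, hδs, hφ]; field_simp; ring
    have i2 : c0 = k0 * (γ * zbar ^ (1 - β) - pi - g) := by
      rw [hc0v, hzbb, hg, hδs, hφ]; field_simp; ring
    rw [hkd, H3 t ht, hzb t ht, hktv, hctv, hPm, i1, i2, hA]
    rw [i1, hA] at hDt
    have hDne := hDt.ne'
    generalize hEm' : Real.exp (-((1 - β) * (γ * zbar ^ (1 - β))) * t) = Em at hDne ⊢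
    generalize hP' : ((zbar ^ (1 - β) - z0 ^ (1 - β)) * Em + z0 ^ (1 - β)) ^ (1 / (1 - β)) = P
    generalize hW' : zbar ^ (1 - β) = W at hDne ⊢
    generalize hZ' : z0 ^ (1 - β) = Z at hDne ⊢
    generalize hEg' : Real.exp (g * t) = Eg
    have hWne : (W - Z) * Em + Z ≠ 0 := hDne
    field_simp
    ring
  · -- (4) h' = δ(1-u)h
    intro t ht
    have hfun : h = fun s => h0 * Real.exp (gh * s) := funext hh
    have hder : deriv h t = h0 * (Real.exp (gh * t) * gh) := by
      rw [hfun]; exact (hasDerivAt_exp_aux h0 gh t).deriv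
    rw [hder, hu t, hh t, hghv]
    ring
  · -- (5) lam' equation
    intro t ht
    have hDt := hDpos t ht
    have hcont : Continuous (fun s : ℝ => A * Real.exp (-m * s) + z0 ^ (1 - β)) := by
      have : Continuous fun s : ℝ => -m * s := continuous_const.mul continuous_id
      exact ((continuous_const.mul this.rexp)).add continuous_const
    have hev : ∀ᶠ s in nhds t, 0 < A * Real.exp (-m * s) + z0 ^ (1 - β) :=
      hcont.continuousAt.eventually (eventually_gt_nhds hDt)
    have heq : lam =ᶠ[nhds t] fun s => c0 ^ (-β) * z0 ^ (-β) * (zbar * z0) ^ β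
        * Real.exp (((ρ - δ) * (1 - β) - δ * θ) / (1 - β) * s)
        * (A * Real.exp (-m * s) + z0 ^ (1 - β)) ^ (-(1 / (1 - β) * β)) := by
      filter_upwards [hev] with s hs
      rw [hlam s, hz s,
        Real.div_rpow (mul_pos hzbarpos hz0).le (Real.rpow_pos_of_pos hs _).le,
        ← Real.rpow_mul hs.le, Real.rpow_neg hs.le]
      ring
    have hld : deriv lam t
        = c0 ^ (-β) * z0 ^ (-β) * (zbar * z0) ^ β
            * Real.exp (((ρ - δ) * (1 - β) - δ * θ) / (1 - β) * t)
            * (A * Real.exp (-m * t) + z0 ^ (1 - β)) ^ (-(1 / (1 - β) * β))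
            * (((ρ - δ) * (1 - β) - δ * θ) / (1 - β))
          - c0 ^ (-β) * z0 ^ (-β) * (zbar * z0) ^ β
            * Real.exp (((ρ - δ) * (1 - β) - δ * θ) / (1 - β) * t)
            * (-(1 / (1 - β) * β)
              * (A * Real.exp (-m * t) + z0 ^ (1 - β)) ^ (-(1 / (1 - β) * β) - 1)
              * (m * (A * Real.exp (-m * t)))) := by
      rw [heq.deriv_eq]
      exact (hasDerivAt_aux (c0 ^ (-β) * z0 ^ (-β) * (zbar * z0) ^ β)
        (((ρ - δ) * (1 - β) - δ * θ) / (1 - β)) A m (z0 ^ (1 - β)) (-(1 / (1 - β) * β)) t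
        hDt.ne').deriv
    have hlamv : lam t = c0 ^ (-β) * z0 ^ (-β) * (zbar * z0) ^ β
        * Real.exp (((ρ - δ) * (1 - β) - δ * θ) / (1 - β) * t)
        * (A * Real.exp (-m * t) + z0 ^ (1 - β)) ^ (-(1 / (1 - β) * β)) := by
      rw [hlam t, hz t,
        Real.div_rpow (mul_pos hzbarpos hz0).le (Real.rpow_pos_of_pos hDt _).le,
        ← Real.rpow_mul hDt.le, Real.rpow_neg hDt.le]
      ring
    have hQm : (A * Real.exp (-m * t) + z0 ^ (1 - β)) ^ (-(1 / (1 - β) * β) - 1)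
        = (A * Real.exp (-m * t) + z0 ^ (1 - β)) ^ (-(1 / (1 - β) * β))
          / (A * Real.exp (-m * t) + z0 ^ (1 - β)) := by
      rw [Real.rpow_sub hDt, Real.rpow_one]
    have i1 : m = (1 - β) * (γ * zbar ^ (1 - β)) := by
      rw [hm, hzbb, hδs, hφ]; field_simp; ring
    have i4 : ((ρ - δ) * (1 - β) - δ * θ) / (1 - β)
        = ρ + pi - β * (γ * zbar ^ (1 - β)) := by
      rw [hzbb, hδs, hφ]; field_simp; ring
    rw [show -(lam t) * γ * β * u t ^ (1 - β) * k t ^ (β - 1) * h t ^ (1 - β + θ)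
        = -(lam t) * γ * β * z t ^ (1 - β) by
      linear_combination (-(lam t) * γ * β) * H5 t ht]
    rw [hld, hlamv, hzb t ht, hQm, i1, i4, hA]
    rw [i1, hA] at hDt
    have hDne := hDt.ne'
    generalize hEm' : Real.exp (-((1 - β) * (γ * zbar ^ (1 - β))) * t) = Em at hDne ⊢
    generalize hQ' : ((zbar ^ (1 - β) - z0 ^ (1 - β)) * Em + z0 ^ (1 - β)) ^ (-(1 / (1 - β) * β)) = Q
    generalize hW' : zbar ^ (1 - β) = W at hDne ⊢
    generalize hZ' : z0 ^ (1 - β) = Z at hDne ⊢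
    have hWne : (W - Z) * Em + Z ≠ 0 := hDne
    field_simp
    ring
  · -- (6) μ' equation
    intro t ht
    have hfun : μ = fun s =>
        μ0 * Real.exp (((ρ - δ) * (1 - β) - δ * θ) * (β - θ) / (β * (1 - β + θ)) * s) :=
      funext hμ
    have hder : deriv μ t
        = μ0 * (Real.exp (((ρ - δ) * (1 - β) - δ * θ) * (β - θ) / (β * (1 - β + θ)) * t)
          * (((ρ - δ) * (1 - β) - δ * θ) * (β - θ) / (β * (1 - β + θ)))) := by
      rw [hfun]; exact (hasDerivAt_exp_aux μ0 _ t).deriv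
    have hr6 : ((ρ - δ) * (1 - β) - δ * θ) * (β - θ) / (β * (1 - β + θ))
        = (ρ - δ) - θ * δ / (1 - β) * ubar := by
      rw [hubar]; field_simp; ring
    rw [hder, hμ t, hu t]
    linear_combination (μ0 * Real.exp (((ρ - δ) * (1 - β) - δ * θ) * (β - θ) / (β * (1 - β + θ)) * t)) * hr6
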